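/- For all integers j ≥ 0, i ≥ 0, and a ≥ 1, the sum ∑_{l=0}^{j} (-1)^l * C(j, l) / ((l + a) * C(l + a + i, i)) equals (a-1)! / ((i + j + a)(i + j + a - 1)⋯(i + j + 1)), where the denominator is the falling factorial (i + j + a)_a. -/

import Mathlib

open Finset

lemma prod_eq (i j a : ℕ) : ∏ m ∈ Finset.range a, ((i : ℚ) + j + a - m)
    = (Nat.factorial (i + j + a) : ℚ) / (Nat.factorial (i + j) : ℚ) := by
  induction a with
  | zero =>
    rw [Finset.prod_range_zero, Nat.add_zero, div_self]
    exact_mod_cast (Nat.factorial_pos _).ne'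
  | succ a ih =>
    rw [Finset.prod_range_succ']
    have h1 : ∀ m ∈ Finset.range a, ((i : ℚ) + j + (a+1 : ℕ) - ((m : ℕ)+1 : ℕ)) = ((i : ℚ) + j + a - m) := by
      intro m _; push_cast; ring
    rw [Finset.prod_congr rfl h1, ih]
    have h2 : i + j + (a + 1) = (i + j + a) + 1 := by ring
    rw [h2, Nat.factorial_succ]
    have hne : ((i+j).factorial : ℚ) ≠ 0 := by exact_mod_cast (Nat.factorial_pos _).ne'
    field_simp
    push_cast; ring

lemma key (i : ℕ) : ∀ j a : ℕ, 1 ≤ a →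
    ∑ l ∈ Finset.range (j + 1),
      (-1 : ℚ) ^ l * (j.choose l) / ((l + a) * ((l + a + i).choose i)) =
      (Nat.factorial (a-1) : ℚ) * (Nat.factorial (i+j)) / (Nat.factorial (i+j+a)) := by
  intro j
  induction j with
  | zero =>
    intro a ha
    rw [Finset.sum_range_one]
    have hfa : a - 1 + 1 = a := by omega
    have h0 : (0:ℕ) + a + i = a + i := by ring
    have h1 : i + 0 = i := by rfl
    rw [h0, h1, show i + a = a + i from Nat.add_comm i a]
    have hc : ((a + i).choose i : ℚ) = ((a+i).factorial : ℚ) / ((i.factorial : ℚ) * (a.factorial : ℚ)) := by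
      rw [Nat.cast_choose ℚ (Nat.le_add_left i a), Nat.add_sub_cancel]
    have hfact : (a.factorial : ℚ) = a * ((a-1).factorial : ℚ) := by
      conv_lhs => rw [← hfa, Nat.factorial_succ]
      push_cast [hfa]; ring
    rw [hc, hfact]
    have n1 : ((a+i).factorial : ℚ) ≠ 0 := by exact_mod_cast (Nat.factorial_pos _).ne'
    have n2 : (i.factorial : ℚ) ≠ 0 := by exact_mod_cast (Nat.factorial_pos _).ne'
    have n3 : ((a-1).factorial : ℚ) ≠ 0 := by exact_mod_cast (Nat.factorial_pos _).ne'
    have n4 : (a:ℚ) ≠ 0 := by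
      have : 0 < a := ha
      exact_mod_cast this.ne'
    simp only [Nat.choose_zero_right, Nat.cast_one, Nat.cast_zero, pow_zero, one_mul, zero_add]
    field_simp
  | succ j ih =>
    intro a ha
    have hstep : ∑ l ∈ Finset.range (j + 1 + 1),
        (-1 : ℚ) ^ l * ((j+1).choose l) / ((l + a) * ((l + a + i).choose i))
      = (∑ l ∈ Finset.range (j + 1),
          (-1 : ℚ) ^ l * (j.choose l) / ((l + a) * ((l + a + i).choose i)))
        - (∑ l ∈ Finset.range (j + 1),
          (-1 : ℚ) ^ l * (j.choose l) / ((l + (a+1)) * ((l + (a+1) + i).choose i))) := by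
      rw [Finset.sum_range_succ' (fun l => (-1 : ℚ) ^ l * ((j+1).choose l) / ((l + a) * ((l + a + i).choose i))) (j+1),
          Finset.sum_range_succ' (fun l => (-1 : ℚ) ^ l * (j.choose l) / ((l + a) * ((l + a + i).choose i))) j]
      have hmain : ∑ l ∈ Finset.range (j+1),
          (-1 : ℚ) ^ (l+1) * ((j+1).choose (l+1)) / ((((l+1:ℕ)) + a) * (((l+1) + a + i).choose i))
        = ∑ l ∈ Finset.range (j+1),
            ((-1 : ℚ) ^ (l+1) * (j.choose (l+1)) / ((((l+1:ℕ)) + a) * (((l+1) + a + i).choose i))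
             - (-1 : ℚ) ^ l * (j.choose l) / ((l + (a+1)) * ((l + (a+1) + i).choose i))) := by
        apply Finset.sum_congr rfl
        intro l _
        rw [Nat.choose_succ_succ j l,
            show l + (a+1) + i = l + 1 + a + i from by ring]
        push_cast
        ring
      rw [hmain, Finset.sum_sub_distrib]
      have hext2 : ∑ l ∈ Finset.range (j+1),
          (-1 : ℚ) ^ (l+1) * (j.choose (l+1)) / ((((l+1:ℕ)) + a) * (((l+1) + a + i).choose i))
        = ∑ l ∈ Finset.range j,
          (-1 : ℚ) ^ (l+1) * (j.choose (l+1)) / ((((l+1:ℕ)) + a) * (((l+1) + a + i).choose i)) := by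
        rw [Finset.sum_range_succ]
        simp [Nat.choose_succ_self]
      rw [hext2]
      simp [Nat.choose_zero_right]
      ring
    rw [hstep, ih a ha]
    have ih2 := ih (a+1) (by omega)
    have e1 : a + 1 - 1 = a := by omega
    rw [e1] at ih2
    push_cast at ih2 ⊢
    rw [ih2]
    rw [show i + j + (a+1) = (i+j+a) + 1 from by omega,
        show i + (j + 1) + a = (i+j+a) + 1 from by omega,
        show i + (j + 1) = (i+j) + 1 from by omega,
        Nat.factorial_succ, Nat.factorial_succ]
    have hfa : a - 1 + 1 = a := by omega
    have hfact : (a.factorial : ℚ) = a * ((a-1).factorial : ℚ) := by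
      conv_lhs => rw [← hfa, Nat.factorial_succ]
      push_cast [hfa]; ring
    rw [hfact]
    have n1 : ((i+j+a).factorial : ℚ) ≠ 0 := by exact_mod_cast (Nat.factorial_pos _).ne'
    have n2 : ((i+j+a:ℕ):ℚ) + 1 ≠ 0 := by positivity
    field_simp
    push_cast; ring

theorem stmt3 (j i a : ℕ) (ha : 1 ≤ a) :
    ∑ l ∈ Finset.range (j + 1),
      (-1 : ℚ) ^ l * (j.choose l) / ((l + a) * ((l + a + i).choose i)) =
      (Nat.factorial (a - 1) : ℚ) /
        ∏ m ∈ Finset.range a, ((i : ℚ) + j + a - m) := by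
  rw [key i j a ha, prod_eq]
  have n1 : ((i+j).factorial : ℚ) ≠ 0 := by exact_mod_cast (Nat.factorial_pos _).ne'
  have n2 : ((i+j+a).factorial : ℚ) ≠ 0 := by exact_mod_cast (Nat.factorial_pos _).ne'
  field_simp
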